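/- Let M be a K{φ,ρ}-module. If M is finitely generated as K⟨ρ⟩-module, M has no nonzero φ-torsion element (M_{tor,φ} = {0}), and γ_ρ is an automorphism of K, then M is free as K⟨ρ⟩-module. -/

import Mathlib

namespace SkewFree
open Polynomial Submodule Function
section A


variable {K : Type} [Field K] {M : Type} [AddCommGroup M] [Module K M]

noncomputable def pact (S : M →+ M) (p : K[X]) (m : M) : M :=
  p.sum fun j (x : K) => x • (⇑S)^[j] m

lemma pact_zero_left (S : M →+ M) (m : M) : pact S (0 : K[X]) m = 0 := by
  unfold pact; exact Polynomial.sum_zero_index _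

lemma pact_monomial (S : M →+ M) (j : ℕ) (x : K) (m : M) :
    pact S (monomial j x) m = x • (⇑S)^[j] m :=
  Polynomial.sum_monomial_index _ _ (zero_smul _ _)

lemma pact_add_left (S : M →+ M) (p q : K[X]) (m : M) :
    pact S (p + q) m = pact S p m + pact S q m :=
  Polynomial.sum_add_index p q _ (fun _ => zero_smul _ _) (fun _ _ _ => add_smul _ _ _)

lemma pact_smul_left (S : M →+ M) (a : K) (p : K[X]) (m : M) :
    pact S (a • p) m = a • pact S p m := by
  unfold pact
  rw [Polynomial.sum_smul_index _ _ _ (fun i => zero_smul K ((⇑S)^[i] m)),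
    Polynomial.sum_def, Polynomial.sum_def, Finset.smul_sum]
  exact Finset.sum_congr rfl fun _ _ => mul_smul _ _ _

noncomputable def pactL (S : M →+ M) (m : M) : K[X] →ₗ[K] M where
  toFun p := pact S p m
  map_add' p q := pact_add_left S p q m
  map_smul' a p := pact_smul_left S a p m

@[simp] lemma pactL_apply (S : M →+ M) (m : M) (p : K[X]) : pactL S m p = pact S p m := rfl

lemma pact_zero_right (S : M →+ M) (p : K[X]) : pact S p 0 = 0 := by
  simp [pact, Polynomial.sum_def, iterate_map_zero]

lemma pact_add_right (S : M →+ M) (p : K[X]) (m m' : M) :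
    pact S p (m + m') = pact S p m + pact S p m' := by
  simp [pact, Polynomial.sum_def, iterate_map_add, smul_add, Finset.sum_add_distrib]

variable (γ : K →+* K) (S : M →+ M)

lemma iter_smul (hS : ∀ (x : K) (m : M), S (x • m) = γ x • S m) (i : ℕ) (x : K) (m : M) :
    (⇑S)^[i] (x • m) = (⇑γ)^[i] x • (⇑S)^[i] m := by
  induction i with
  | zero => simp
  | succ n ih =>
      rw [Function.iterate_succ_apply', ih, hS, Function.iterate_succ_apply',
        Function.iterate_succ_apply']

noncomputable def pshift (i : ℕ) (p : K[X]) : K[X] := X ^ i * p.map (γ ^ i)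

lemma pact_pshift (hS : ∀ (x : K) (m : M), S (x • m) = γ x • S m) (i : ℕ) (p : K[X]) (m : M) :
    pact S (pshift γ i p) m = (⇑S)^[i] (pact S p m) := by
  induction p using Polynomial.induction_on' with
  | add p q hp hq =>
      rw [pshift, Polynomial.map_add, mul_add, ← pshift, ← pshift, pact_add_left,
        pact_add_left, hp, hq, iterate_map_add]
  | monomial n a =>
      rw [pshift, map_monomial, mul_comm, monomial_mul_X_pow, pact_monomial, pact_monomial,
        iter_smul γ S hS, ← RingHom.coe_pow, add_comm n i, Function.iterate_add_apply]

noncomputable def pmul (p q : K[X]) : K[X] := p.sum fun i a => a • pshift γ i q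

lemma pact_pmul (hS : ∀ (x : K) (m : M), S (x • m) = γ x • S m) (p q : K[X]) (m : M) :
    pact S (pmul γ p q) m = pact S p (pact S q m) := by
  rw [pmul, Polynomial.sum_def]
  rw [show pact S (∑ i ∈ p.support, p.coeff i • pshift γ i q) m
      = pactL S m (∑ i ∈ p.support, p.coeff i • pshift γ i q) from rfl, map_sum]
  conv_rhs => rw [pact, Polynomial.sum_def]
  refine Finset.sum_congr rfl fun i _ => ?_
  rw [map_smul, pactL_apply, pact_pshift γ S hS]


end A
section B


variable {K : Type} [Field K] {M : Type} [AddCommGroup M] [Module K M]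
variable (γ : K →+* K)

lemma pshift_monomial (i s : ℕ) (x : K) :
    pshift γ i (monomial s x) = monomial (s + i) ((γ ^ i) x) := by
  rw [pshift, map_monomial, mul_comm, monomial_mul_X_pow]

lemma pshift_add (i : ℕ) (p q : K[X]) :
    pshift γ i (p + q) = pshift γ i p + pshift γ i q := by
  rw [pshift, Polynomial.map_add, mul_add]; rfl

lemma pshift_zero (i : ℕ) : pshift γ i (0 : K[X]) = 0 := by
  simp [pshift]

lemma pmul_zero_right (q : K[X]) : pmul γ q 0 = 0 := by
  simp [pmul, pshift_zero, Polynomial.sum_def]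

lemma pmul_add_right (q v w : K[X]) : pmul γ q (v + w) = pmul γ q v + pmul γ q w := by
  simp only [pmul, Polynomial.sum_def, pshift_add, smul_add, Finset.sum_add_distrib]

lemma pmul_add_left (u u' : K[X]) (q : K[X]) :
    pmul γ (u + u') q = pmul γ u q + pmul γ u' q :=
  Polynomial.sum_add_index u u' _ (fun _ => zero_smul _ _) (fun _ _ _ => add_smul _ _ _)

lemma pmul_monomial_left (s : ℕ) (x : K) (q : K[X]) :
    pmul γ (monomial s x) q = x • pshift γ s q :=
  Polynomial.sum_monomial_index _ _ (zero_smul _ _)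

lemma pmul_monomial_right (q : K[X]) (s : ℕ) (x : K) :
    pmul γ q (monomial s x) = q.sum fun i a => monomial (i + s) (a * (γ ^ i) x) := by
  rw [pmul, Polynomial.sum_def, Polynomial.sum_def]
  refine Finset.sum_congr rfl fun i _ => ?_
  rw [pshift_monomial, Polynomial.smul_monomial, smul_eq_mul, add_comm s i]

lemma pmul_monomial_right_degree_le (q : K[X]) (s : ℕ) (x : K) :
    (pmul γ q (monomial s x)).degree ≤ (q.natDegree + s : ℕ) := by
  rw [pmul_monomial_right, Polynomial.sum_def]
  refine le_trans (Polynomial.degree_sum_le _ _) ?_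
  refine Finset.sup_le fun i hi => ?_
  refine le_trans (degree_monomial_le _ _) ?_
  exact_mod_cast Nat.add_le_add_right (Polynomial.le_natDegree_of_mem_supp i hi) s

lemma pmul_monomial_right_coeff_top (q : K[X]) (s : ℕ) (x : K) :
    (pmul γ q (monomial s x)).coeff (q.natDegree + s) =
      q.leadingCoeff * (γ ^ q.natDegree) x := by
  rw [pmul_monomial_right, Polynomial.sum_def, Polynomial.finset_sum_coeff]
  rw [Finset.sum_eq_single q.natDegree]
  · rw [Polynomial.coeff_monomial, if_pos rfl]; rfl
  · intro i _ hne
    rw [Polynomial.coeff_monomial, if_neg (by omega)]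
  · intro h
    have : q.coeff q.natDegree = 0 := Polynomial.notMem_support_iff.mp h
    simp [Polynomial.coeff_monomial, this]

/-- Right division: `p = q * v + r` in the skew sense. Needs `γ` surjective. -/
lemma rdiv (hγ : Function.Bijective γ) (q : K[X]) (hq : q ≠ 0) (p : K[X]) :
    ∃ v r : K[X], p = pmul γ q v + r ∧ r.degree < q.degree := by
  suffices H : ∀ (n : ℕ) (p : K[X]), p.natDegree ≤ n →
      ∃ v r : K[X], p = pmul γ q v + r ∧ r.degree < q.degree from H p.natDegree p le_rfl
  intro n
  induction n using Nat.strong_induction_on with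
  | _ n IH =>
    intro p hp
    by_cases h0 : p.degree < q.degree
    · exact ⟨0, p, by rw [pmul_zero_right, zero_add], h0⟩
    push_neg at h0
    have hp0 : p ≠ 0 := by
      intro h; rw [h, Polynomial.degree_zero] at h0
      exact hq (Polynomial.degree_eq_bot.mp (le_bot_iff.mp h0))
    have hdq_le : q.natDegree ≤ p.natDegree := Polynomial.natDegree_le_natDegree h0
    have hbij : Function.Bijective ⇑(γ ^ q.natDegree) := by
      rw [RingHom.coe_pow]; exact hγ.iterate q.natDegree
    obtain ⟨y, hy⟩ := hbij.surjective (p.leadingCoeff / q.leadingCoeff)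
    set c := pmul γ q (monomial (p.natDegree - q.natDegree) y) with hc
    have hct : c.coeff p.natDegree = p.leadingCoeff := by
      have h1 := pmul_monomial_right_coeff_top γ q (p.natDegree - q.natDegree) y
      rw [Nat.add_sub_cancel' hdq_le] at h1
      rw [hc, h1, hy, mul_div_cancel₀]
      exact Polynomial.leadingCoeff_ne_zero.mpr hq
    have hcd : c.degree ≤ p.natDegree := by
      rw [hc]
      refine le_trans (pmul_monomial_right_degree_le _ _ _ _) ?_
      exact_mod_cast le_of_eq (by omega)
    have hdeg : p.degree = c.degree := by
      refine le_antisymm ?_ (le_trans hcd (le_of_eq (Polynomial.degree_eq_natDegree hp0).symm))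
      rw [Polynomial.degree_eq_natDegree hp0]
      exact Polynomial.le_degree_of_ne_zero (by
        rw [hct]; exact Polynomial.leadingCoeff_ne_zero.mpr hp0)
    have hlc : p.leadingCoeff = c.leadingCoeff := by
      have hnd : c.natDegree = p.natDegree := (Polynomial.natDegree_eq_of_degree_eq hdeg).symm
      rw [show c.leadingCoeff = c.coeff c.natDegree from rfl, hnd, hct]
    by_cases hpc : p - c = 0
    · refine ⟨monomial (p.natDegree - q.natDegree) y, 0, ?_, ?_⟩
      · rw [← hc, add_zero, ← sub_eq_zero, hpc]
      · rw [Polynomial.degree_zero]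
        exact Ne.bot_lt (fun h => hq (Polynomial.degree_eq_bot.mp h))
    · have hlt : (p - c).degree < p.degree := Polynomial.degree_sub_lt hdeg hp0 hlc
      have hnd : (p - c).natDegree < n :=
        lt_of_lt_of_le (Polynomial.natDegree_lt_natDegree hpc hlt) hp
      obtain ⟨v, r, heq, hr⟩ := IH (p - c).natDegree hnd (p - c) le_rfl
      refine ⟨monomial (p.natDegree - q.natDegree) y + v, r, ?_, hr⟩
      rw [pmul_add_right, ← hc]
      rw [show p = c + (p - c) by ring, heq]
      ring


end B
section C
variable {K : Type} [Field K]
variable (γ : K →+* K)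

lemma pmul_zero_left (q : K[X]) : pmul γ 0 q = 0 := Polynomial.sum_zero_index _

lemma pshift_degree (s : ℕ) (q : K[X]) : (pshift γ s q).degree = s + q.degree := by
  rw [pshift, Polynomial.degree_mul, Polynomial.degree_X_pow,
    Polynomial.degree_map_eq_of_injective (γ ^ s).injective]

lemma pshift_leadingCoeff (s : ℕ) (q : K[X]) :
    (pshift γ s q).leadingCoeff = (γ ^ s) q.leadingCoeff := by
  rw [pshift, Polynomial.leadingCoeff_mul, Polynomial.leadingCoeff_X_pow, one_mul,
    Polynomial.leadingCoeff_map_of_injective (γ ^ s).injective]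

/-- Left division: `p = u * q + r` in the skew sense. -/
lemma ldiv (q : K[X]) (hq : q ≠ 0) (p : K[X]) :
    ∃ u r : K[X], p = pmul γ u q + r ∧ r.degree < q.degree := by
  suffices H : ∀ (n : ℕ) (p : K[X]), p.natDegree ≤ n →
      ∃ u r : K[X], p = pmul γ u q + r ∧ r.degree < q.degree from H p.natDegree p le_rfl
  intro n
  induction n using Nat.strong_induction_on with
  | _ n IH =>
    intro p hp
    by_cases h0 : p.degree < q.degree
    · exact ⟨0, p, by rw [pmul_zero_left, zero_add], h0⟩
    push_neg at h0
    have hp0 : p ≠ 0 := by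
      intro h; rw [h, Polynomial.degree_zero] at h0
      exact hq (Polynomial.degree_eq_bot.mp (le_bot_iff.mp h0))
    have hdq_le : q.natDegree ≤ p.natDegree := Polynomial.natDegree_le_natDegree h0
    set s := p.natDegree - q.natDegree with hs
    set u := p.leadingCoeff / ((γ ^ s) q.leadingCoeff) with hu
    have hql : q.leadingCoeff ≠ 0 := Polynomial.leadingCoeff_ne_zero.mpr hq
    have hgql : (γ ^ s) q.leadingCoeff ≠ 0 := fun h => hql ((γ ^ s).injective (by rw [h, map_zero]))
    have hu0 : u ≠ 0 := div_ne_zero (Polynomial.leadingCoeff_ne_zero.mpr hp0) hgql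
    set c := pmul γ (monomial s u) q with hc
    have hcu : c = C u * pshift γ s q := by
      rw [hc, pmul_monomial_left, Polynomial.smul_eq_C_mul]
    have hdeg : p.degree = c.degree := by
      rw [hcu, Polynomial.degree_mul, Polynomial.degree_C hu0, zero_add, pshift_degree,
        Polynomial.degree_eq_natDegree hq, Polynomial.degree_eq_natDegree hp0]
      exact_mod_cast (by omega : p.natDegree = s + q.natDegree)
    have hlc : p.leadingCoeff = c.leadingCoeff := by
      rw [hcu, Polynomial.leadingCoeff_mul, Polynomial.leadingCoeff_C,
        pshift_leadingCoeff, hu, div_mul_cancel₀ _ hgql]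
    by_cases hpc : p - c = 0
    · refine ⟨monomial s u, 0, ?_, ?_⟩
      · rw [← hc, add_zero, ← sub_eq_zero, hpc]
      · rw [Polynomial.degree_zero]
        exact Ne.bot_lt (fun h => hq (Polynomial.degree_eq_bot.mp h))
    · have hlt : (p - c).degree < p.degree := Polynomial.degree_sub_lt hdeg hp0 hlc
      have hnd : (p - c).natDegree < n :=
        lt_of_lt_of_le (Polynomial.natDegree_lt_natDegree hpc hlt) hp
      obtain ⟨v, r, heq, hr⟩ := IH (p - c).natDegree hnd (p - c) le_rfl
      refine ⟨monomial s u + v, r, ?_, hr⟩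
      rw [pmul_add_left, ← hc, show p = c + (p - c) by ring, heq]
      ring

end C
section D


variable {K : Type} [Field K] {M : Type} [AddCommGroup M] [Module K M]

def IsTor (S : M →+ M) (m : M) : Prop := ∃ p : K[X], p ≠ 0 ∧ pact S p m = 0

variable (γ : K →+* K) (S : M →+ M)

lemma S_mem_span (hS : ∀ (x : K) (m : M), S (x • m) = γ x • S m)
    {A : Set M} {N : Submodule K M} (h0 : ∀ a ∈ A, S a ∈ N) :
    ∀ v ∈ span K A, S v ∈ N := by
  intro v hv
  induction hv using span_induction with
  | mem x hx => exact h0 x hx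
  | zero => rw [map_zero]; exact N.zero_mem
  | add x y _ _ hx hy => rw [map_add]; exact N.add_mem hx hy
  | smul a x _ hx => rw [hS]; exact N.smul_mem _ hx

lemma iterates_in_span (hS : ∀ (x : K) (m : M), S (x • m) = γ x • S m)
    (m : M) (p : K[X]) (hp : p ≠ 0) (h : pact S p m = 0) :
    ∀ j, (⇑S)^[j] m ∈ span K {v | ∃ l < p.natDegree, v = (⇑S)^[l] m} := by
  set e := p.natDegree with he
  set A : Set M := {v | ∃ l < e, v = (⇑S)^[l] m} with hA
  set W := span K A with hW
  have hmem : ∀ l < e, (⇑S)^[l] m ∈ W := fun l hl => subset_span ⟨l, hl, rfl⟩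
  have hstep : (⇑S)^[e] m ∈ W := by
    have hsum : pact S p m = ∑ j ∈ Finset.range (e + 1), p.coeff j • (⇑S)^[j] m := by
      unfold pact
      exact Polynomial.sum_over_range' p (fun n => zero_smul K ((⇑S)^[n] m)) (e + 1) (by omega)
    rw [h] at hsum
    rw [Finset.sum_range_succ] at hsum
    have hlc : p.coeff e ≠ 0 := by
      rw [he]; exact Polynomial.leadingCoeff_ne_zero.mpr hp
    have h2 : p.coeff e • (⇑S)^[e] m = -∑ j ∈ Finset.range e, p.coeff j • (⇑S)^[j] m := by
      rw [eq_neg_iff_add_eq_zero, add_comm]; exact hsum.symm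
    have h3 : (⇑S)^[e] m = (p.coeff e)⁻¹ • (p.coeff e • (⇑S)^[e] m) := by
      rw [smul_smul, inv_mul_cancel₀ hlc, one_smul]
    rw [h3, h2]
    refine W.smul_mem _ (W.neg_mem (Submodule.sum_mem W fun j hj => ?_))
    exact W.smul_mem _ (hmem j (Finset.mem_range.mp hj))
  have hWs : ∀ v ∈ W, S v ∈ W := by
    refine S_mem_span γ S hS fun a ha => ?_
    obtain ⟨l, hl, rfl⟩ := ha
    rw [← Function.iterate_succ_apply' S l m]
    rcases Nat.lt_or_ge (l + 1) e with h' | h'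
    · exact hmem _ h'
    · have hle : l + 1 = e := by omega
      show (⇑S)^[l + 1] m ∈ W
      rw [hle]; exact hstep
  intro j
  induction j with
  | zero =>
      rcases Nat.eq_zero_or_pos e with h' | h'
      · simpa [← h'] using hstep
      · exact hmem 0 h'
  | succ k ih => rw [Function.iterate_succ_apply']; exact hWs _ ih

lemma tor_iterates (hS : ∀ (x : K) (m : M), S (x • m) = γ x • S m) {m : M} (h : IsTor (K := K) S m) :
    ∃ t : Finset M, ∀ j, (⇑S)^[j] m ∈ span K (t : Set M) := by
  classical
  obtain ⟨p, hp, hp0⟩ := h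
  refine ⟨(Finset.range p.natDegree).image fun l => (⇑S)^[l] m, fun j => ?_⟩
  have := iterates_in_span γ S hS m p hp hp0 j
  refine Submodule.span_mono ?_ this
  rintro v ⟨l, hl, rfl⟩
  exact Finset.mem_coe.mpr (Finset.mem_image.mpr ⟨l, Finset.mem_range.mpr hl, rfl⟩)

lemma dep_of_findim (v : ℕ → M) (t : Finset M) (h : ∀ j, v j ∈ span K (t : Set M)) :
    ∃ c : Fin (t.card + 1) → K, (∃ j, c j ≠ 0) ∧ ∑ j, c j • v (j : ℕ) = 0 := by
  set W := span K (t : Set M) with hW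
  haveI : FiniteDimensional K W := FiniteDimensional.span_of_finite K t.finite_toSet
  set v' : Fin (t.card + 1) → W := fun j => ⟨v j, h j⟩ with hv'
  have hnli : ¬ LinearIndependent K v' := by
    intro hli
    have h1 := hli.fintype_card_le_finrank
    have h2 : Module.finrank K W ≤ t.card := by simpa [hW] using finrank_span_le_card (t : Set M)
    rw [Fintype.card_fin] at h1
    omega
  obtain ⟨g, hg0, hgne⟩ := Fintype.not_linearIndependent_iff.mp hnli
  refine ⟨g, hgne, ?_⟩
  have := congrArg (Subtype.val) hg0
  rw [Submodule.coe_sum] at this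
  simpa using this

lemma tor_of_iterates {m : M} (t : Finset M) (h : ∀ j, (⇑S)^[j] m ∈ span K (t : Set M)) :
    IsTor (K := K) S m := by
  obtain ⟨c, ⟨j₀, hj₀⟩, hsum⟩ := dep_of_findim (fun j => (⇑S)^[j] m) t h
  refine ⟨∑ j : Fin (t.card + 1), monomial (j : ℕ) (c j), ?_, ?_⟩
  · intro hzero
    have := congrArg (fun p => Polynomial.coeff p (j₀ : ℕ)) hzero
    simp only [Polynomial.finset_sum_coeff, Polynomial.coeff_monomial, Polynomial.coeff_zero] at this
    rw [Finset.sum_eq_single j₀] at this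
    · exact hj₀ (by simpa using this)
    · intro b _ hb
      rw [if_neg (fun hbb => hb (Fin.ext hbb))]
    · intro hj; exact absurd (Finset.mem_univ j₀) hj
  · have : ∀ (q q' : K[X]) (m : M), pact S (q + q') m = pact S q m + pact S q' m :=
      fun q q' m => Polynomial.sum_add_index q q' _ (fun _ => zero_smul _ _) (fun _ _ _ => add_smul _ _ _)
    rw [show pact S (∑ j : Fin (t.card + 1), monomial (j : ℕ) (c j)) m
        = ∑ j : Fin (t.card + 1), pact S (monomial (j : ℕ) (c j)) m from
      map_sum (⟨⟨fun p => pact S p m, Polynomial.sum_zero_index _⟩, fun q q' => this q q' m⟩ :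
        K[X] →+ M) _ _]
    simpa [pact_monomial] using hsum


end D
section E
variable {K : Type} [Field K] {M : Type} [AddCommGroup M] [Module K M]
variable (γ : K →+* K) (S : M →+ M)

lemma pact_sub_left (p q : K[X]) (m : M) :
    pact S (p - q) m = pact S p m - pact S q m := (pactL S m).map_sub p q

lemma tor_zero : IsTor (K := K) S (0 : M) := ⟨1, one_ne_zero, pact_zero_right S 1⟩

lemma tor_add (hS : ∀ (x : K) (m : M), S (x • m) = γ x • S m) {m m' : M}
    (h : IsTor (K := K) S m) (h' : IsTor (K := K) S m') : IsTor (K := K) S (m + m') := by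
  classical
  obtain ⟨t, ht⟩ := tor_iterates γ S hS h
  obtain ⟨t', ht'⟩ := tor_iterates γ S hS h'
  refine tor_of_iterates S (t ∪ t') fun j => ?_
  rw [iterate_map_add]
  rw [Finset.coe_union]
  exact Submodule.add_mem _ (span_mono Set.subset_union_left (ht j))
    (span_mono Set.subset_union_right (ht' j))

lemma tor_smul (hS : ∀ (x : K) (m : M), S (x • m) = γ x • S m) {m : M} (x : K)
    (h : IsTor (K := K) S m) : IsTor (K := K) S (x • m) := by
  obtain ⟨t, ht⟩ := tor_iterates γ S hS h
  refine tor_of_iterates S t fun j => ?_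
  rw [iter_smul γ S hS]
  exact Submodule.smul_mem _ _ (ht j)

lemma tor_S (hS : ∀ (x : K) (m : M), S (x • m) = γ x • S m) {m : M}
    (h : IsTor (K := K) S m) : IsTor (K := K) S (S m) := by
  obtain ⟨t, ht⟩ := tor_iterates γ S hS h
  refine tor_of_iterates S t fun j => ?_
  rw [← Function.iterate_succ_apply]
  exact ht (j + 1)

lemma iter_comm (F : M →+ M) (hFS : ∀ m : M, F (S m) = S (F m)) (j : ℕ) (m : M) :
    F ((⇑S)^[j] m) = (⇑S)^[j] (F m) := by
  induction j with
  | zero => rfl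
  | succ k ih =>
      rw [Function.iterate_succ_apply', Function.iterate_succ_apply', hFS, ih]

lemma pact_map_comm (F : M →+ M) (γφ : K →+* K)
    (hF : ∀ (x : K) (m : M), F (x • m) = γφ x • F m)
    (hFS : ∀ m : M, F (S m) = S (F m)) (p : K[X]) (m : M) :
    pact S (p.map γφ) (F m) = F (pact S p m) := by
  induction p using Polynomial.induction_on' with
  | add p q hp hq =>
      rw [Polynomial.map_add, pact_add_left, pact_add_left, map_add, hp, hq]
  | monomial n a =>
      rw [Polynomial.map_monomial, pact_monomial, pact_monomial, hF,
        iter_comm S F hFS]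

lemma tor_F (F : M →+ M) (γφ : K →+* K)
    (hF : ∀ (x : K) (m : M), F (x • m) = γφ x • F m)
    (hFS : ∀ m : M, F (S m) = S (F m)) {m : M}
    (h : IsTor (K := K) S m) : IsTor (K := K) S (F m) := by
  obtain ⟨p, hp, h0⟩ := h
  exact ⟨p.map γφ, Polynomial.map_ne_zero hp, by rw [pact_map_comm S F γφ hF hFS, h0, map_zero]⟩

lemma pact_mem {N : Submodule K M} (hNS : ∀ v ∈ N, S v ∈ N) {m : M} (hm : m ∈ N)
    (p : K[X]) : pact S p m ∈ N := by
  have hiter : ∀ j, (⇑S)^[j] m ∈ N := by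
    intro j
    induction j with
    | zero => exact hm
    | succ k ih => rw [Function.iterate_succ_apply']; exact hNS _ ih
  rw [pact, Polynomial.sum_def]
  exact Submodule.sum_mem _ fun j _ => N.smul_mem _ (hiter j)

end E
section F0
variable (K : Type) [Field K] {M : Type} [AddCommGroup M] [Module K M] (S : M →+ M)

/-- The `K⟨ρ⟩`-span of the iterates of a single element. -/
noncomputable def iterSpan (x : M) : Submodule K M := span K {v | ∃ l : ℕ, v = (⇑S)^[l] x}

/-- The `K⟨ρ⟩`-span of finitely many generators. -/
noncomputable def spanR {n : ℕ} (w : Fin n → M) : Submodule K M :=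
  span K {v | ∃ (i : Fin n) (l : ℕ), v = (⇑S)^[l] (w i)}
end F0
section E2
variable {K : Type} [Field K] {M : Type} [AddCommGroup M] [Module K M]
variable (γ : K →+* K) (S : M →+ M)

lemma mem_iterSpan_iff {x v : M} : v ∈ iterSpan K S x ↔ ∃ p : K[X], v = pact S p x := by
  constructor
  · intro hv
    induction hv using span_induction with
    | mem w hw =>
        obtain ⟨l, rfl⟩ := hw
        exact ⟨monomial l 1, by rw [pact_monomial, one_smul]⟩
    | zero => exact ⟨0, (pact_zero_left S x).symm⟩
    | add a b _ _ ha hb =>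
        obtain ⟨p, rfl⟩ := ha; obtain ⟨q, rfl⟩ := hb
        exact ⟨p + q, (pact_add_left S p q x).symm⟩
    | smul a w _ hw =>
        obtain ⟨p, rfl⟩ := hw
        exact ⟨a • p, (pact_smul_left S a p x).symm⟩
  · rintro ⟨p, rfl⟩
    rw [pact, Polynomial.sum_def]
    exact Submodule.sum_mem _ fun j _ =>
      Submodule.smul_mem _ _ (subset_span ⟨j, rfl⟩)

lemma spanR_S_stable (hS : ∀ (x : K) (m : M), S (x • m) = γ x • S m) {n : ℕ}
    (w : Fin n → M) : ∀ v ∈ spanR K S w, S v ∈ spanR K S w := by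
  refine S_mem_span γ S hS fun a ha => ?_
  obtain ⟨i, l, rfl⟩ := ha
  exact subset_span ⟨i, l + 1, (Function.iterate_succ_apply' S l (w i)).symm⟩

lemma iterSpan_S_stable (hS : ∀ (x : K) (m : M), S (x • m) = γ x • S m) (x : M) :
    ∀ v ∈ iterSpan K S x, S v ∈ iterSpan K S x := by
  refine S_mem_span γ S hS fun a ha => ?_
  obtain ⟨l, rfl⟩ := ha
  exact subset_span ⟨l + 1, (Function.iterate_succ_apply' S l x).symm⟩

lemma spanR_succ {n : ℕ} (g : Fin (n + 1) → M) :
    spanR K S g = iterSpan K S (g (Fin.last n)) ⊔ spanR K S (g ∘ Fin.castSucc) := by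
  rw [iterSpan, spanR, spanR, ← Submodule.span_union]
  congr 1
  ext v
  constructor
  · rintro ⟨i, l, rfl⟩
    rcases Fin.eq_castSucc_or_eq_last i with ⟨j, rfl⟩ | rfl
    · exact Or.inr ⟨j, l, rfl⟩
    · exact Or.inl ⟨l, rfl⟩
  · rintro (⟨l, rfl⟩ | ⟨j, l, rfl⟩)
    · exact ⟨Fin.last n, l, rfl⟩
    · exact ⟨Fin.castSucc j, l, rfl⟩

lemma spanR_mono_snoc {n : ℕ} (h' : Fin n → M) (x : M) :
    spanR K S h' ≤ spanR K S (Fin.snoc h' x : Fin (n + 1) → M) := by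
  refine span_le.mpr ?_
  rintro v ⟨i, l, rfl⟩
  exact subset_span ⟨Fin.castSucc i, l, by rw [Fin.snoc_castSucc]⟩

lemma iterSpan_le_spanR_snoc {n : ℕ} (h' : Fin n → M) (x : M) :
    iterSpan K S x ≤ spanR K S (Fin.snoc h' x : Fin (n + 1) → M) := by
  refine span_le.mpr ?_
  rintro v ⟨l, rfl⟩
  exact subset_span ⟨Fin.last n, l, by rw [Fin.snoc_last]⟩

/-- Every `K⟨ρ⟩`-submodule of a module generated by `n` elements is generated by
`n` elements (all taken inside the submodule). -/
lemma submodule_fg (hS : ∀ (x : K) (m : M), S (x • m) = γ x • S m) :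
    ∀ (n : ℕ) (g : Fin n → M) (N : Submodule K M),
      (∀ v ∈ N, S v ∈ N) → N ≤ spanR K S g →
      ∃ h : Fin n → M, (∀ i, h i ∈ N) ∧ N ≤ spanR K S h := by
  intro n
  induction n with
  | zero => exact fun g N _ hle => ⟨g, fun i => i.elim0, hle⟩
  | succ n IH =>
    intro g N hNS hle
    classical
    set g' : Fin n → M := g ∘ Fin.castSucc with hg'
    set glast := g (Fin.last n) with hglast
    set N' : Submodule K M := N ⊓ spanR K S g' with hN'
    have hN'S : ∀ v ∈ N', S v ∈ N' := fun v hv =>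
      ⟨hNS v hv.1, spanR_S_stable γ S hS g' v hv.2⟩
    obtain ⟨h', hh'N, hN'le⟩ := IH g' N' hN'S inf_le_right
    set I : Set K[X] := {p | ∃ w ∈ spanR K S g', pact S p glast + w ∈ N} with hI
    have hIpmul : ∀ p ∈ I, ∀ u : K[X], pmul γ u p ∈ I := by
      rintro p ⟨w, hw, hpw⟩ u
      refine ⟨pact S u w, pact_mem S (spanR_S_stable γ S hS g') hw u, ?_⟩
      rw [pact_pmul γ S hS, ← pact_add_right]
      exact pact_mem S hNS hpw u
    have hIsub : ∀ p ∈ I, ∀ q ∈ I, p - q ∈ I := by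
      rintro p ⟨w, hw, hpw⟩ q ⟨w', hw', hqw⟩
      refine ⟨w - w', Submodule.sub_mem _ hw hw', ?_⟩
      rw [pact_sub_left]
      have : pact S p glast - pact S q glast + (w - w') =
          (pact S p glast + w) - (pact S q glast + w') := by abel
      rw [this]
      exact Submodule.sub_mem _ hpw hqw
    by_cases hItriv : ∀ p ∈ I, p = 0
    · refine ⟨Fin.snoc h' 0, ?_, ?_⟩
      · intro i
        rcases Fin.eq_castSucc_or_eq_last i with ⟨j, rfl⟩ | rfl
        · rw [Fin.snoc_castSucc]; exact ((hh'N j).1 : h' j ∈ N)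
        · rw [Fin.snoc_last]; exact N.zero_mem
      · intro v hv
        have hvs : v ∈ spanR K S g := hle hv
        rw [spanR_succ] at hvs
        obtain ⟨a, ha, b, hb, rfl⟩ := Submodule.mem_sup.mp hvs
        obtain ⟨p, rfl⟩ := (mem_iterSpan_iff S).mp ha
        have hp0 : p = 0 := hItriv p ⟨b, hb, hv⟩
        rw [hp0, pact_zero_left, zero_add] at hv ⊢
        exact spanR_mono_snoc S h' 0 (hN'le ⟨hv, hb⟩)
    · push_neg at hItriv
      obtain ⟨p₁, hp₁I, hp₁0⟩ := hItriv
      have hex : ∃ d, ∃ p, p ∈ I ∧ p ≠ 0 ∧ p.natDegree = d := ⟨p₁.natDegree, p₁, hp₁I, hp₁0, rfl⟩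
      obtain ⟨p₀, hp₀I, hp₀0, hp₀d⟩ := Nat.find_spec hex
      have hmin : ∀ p ∈ I, p ≠ 0 → p₀.natDegree ≤ p.natDegree := by
        intro p hpI hpne
        rw [hp₀d]
        by_contra hlt
        exact Nat.find_min hex (lt_of_not_ge hlt) ⟨p, hpI, hpne, rfl⟩
      have hdiv : ∀ p ∈ I, ∃ u : K[X], p = pmul γ u p₀ := by
        intro p hpI
        obtain ⟨u, r, heq, hr⟩ := ldiv γ p₀ hp₀0 p
        have hrI : r ∈ I := by
          have : r = p - pmul γ u p₀ := by rw [heq]; ring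
          rw [this]
          exact hIsub _ hpI _ (hIpmul _ hp₀I u)
        by_cases hr0 : r = 0
        · exact ⟨u, by rw [heq, hr0, add_zero]⟩
        · exact absurd (hmin r hrI hr0) (not_le.mpr (Polynomial.natDegree_lt_natDegree hr0 hr))
      obtain ⟨w₀, hw₀, hm₀⟩ := hp₀I
      set m₀ := pact S p₀ glast + w₀ with hm₀def
      refine ⟨Fin.snoc h' m₀, ?_, ?_⟩
      · intro i
        rcases Fin.eq_castSucc_or_eq_last i with ⟨j, rfl⟩ | rfl
        · rw [Fin.snoc_castSucc]; exact ((hh'N j).1 : h' j ∈ N)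
        · rw [Fin.snoc_last]; exact hm₀
      · intro v hv
        have hvs : v ∈ spanR K S g := hle hv
        rw [spanR_succ] at hvs
        obtain ⟨a, ha, b, hb, rfl⟩ := Submodule.mem_sup.mp hvs
        obtain ⟨p, rfl⟩ := (mem_iterSpan_iff S).mp ha
        obtain ⟨u, rfl⟩ := hdiv p ⟨b, hb, hv⟩
        have hsub : pact S (pmul γ u p₀) glast + b - pact S u m₀ = b - pact S u w₀ := by
          rw [hm₀def, pact_add_right, pact_pmul γ S hS]
          abel
        have hsubN : pact S (pmul γ u p₀) glast + b - pact S u m₀ ∈ N' := by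
          constructor
          · exact Submodule.sub_mem _ hv (pact_mem S hNS hm₀ u)
          · rw [hsub]
            exact Submodule.sub_mem _ hb (pact_mem S (spanR_S_stable γ S hS g') hw₀ u)
        have h1 : pact S (pmul γ u p₀) glast + b - pact S u m₀ ∈
            spanR K S (Fin.snoc h' m₀ : Fin (n + 1) → M) :=
          spanR_mono_snoc S h' m₀ (hN'le hsubN)
        have h2 : pact S u m₀ ∈ spanR K S (Fin.snoc h' m₀ : Fin (n + 1) → M) :=
          iterSpan_le_spanR_snoc S h' m₀ ((mem_iterSpan_iff S).mpr ⟨u, rfl⟩)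
        have hsplit : pact S (pmul γ u p₀) glast + b
            = (pact S (pmul γ u p₀) glast + b - pact S u m₀) + pact S u m₀ := by abel
        rw [hsplit]
        exact Submodule.add_mem _ h1 h2
end E2

section G
variable {K : Type} [Field K] {M : Type} [AddCommGroup M] [Module K M]
variable (γ : K →+* K) (S : M →+ M)

lemma iter_mem {N : Submodule K M} (hNS : ∀ v ∈ N, S v ∈ N) {m : M} (hm : m ∈ N) :
    ∀ l, (⇑S)^[l] m ∈ N := by
  intro l
  induction l with
  | zero => exact hm
  | succ k ih => rw [Function.iterate_succ_apply']; exact hNS _ ih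

/-- If the module is finitely generated over `K⟨ρ⟩` and `φ`-torsion-free,
then it has no nonzero `ρ`-torsion element. -/
lemma tor_eq_bot (hS : ∀ (x : K) (m : M), S (x • m) = γ x • S m)
    (F : M →+ M) (γφ : K →+* K)
    (hF : ∀ (x : K) (m : M), F (x • m) = γφ x • F m)
    (hFS : ∀ m : M, F (S m) = S (F m))
    {n : ℕ} (g : Fin n → M) (hg : spanR K S g = ⊤)
    (htf : ∀ m : M, IsTor (K := K) F m → m = 0) :
    ∀ m : M, IsTor (K := K) S m → m = 0 := by
  classical
  set N : Submodule K M :=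
    { carrier := {m | IsTor (K := K) S m}
      add_mem' := fun hm hm' => tor_add γ S hS hm hm'
      zero_mem' := tor_zero S
      smul_mem' := fun x m hm => tor_smul γ S hS x hm } with hN
  have hNS : ∀ v ∈ N, S v ∈ N := fun v hv => tor_S γ S hS hv
  obtain ⟨h, hhN, hNle⟩ := submodule_fg γ S hS n g N hNS (hg ▸ le_top)
  choose t ht using fun i => tor_iterates γ S hS (hhN i)
  set T : Finset M := Finset.univ.biUnion t with hT
  have hsub : ∀ v ∈ N, v ∈ span K (T : Set M) := by
    intro v hv
    refine (span_le.mpr ?_ : spanR K S h ≤ span K (T : Set M)) (hNle hv)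
    rintro w ⟨i, l, rfl⟩
    refine span_mono ?_ (ht i l)
    intro y hy
    exact Finset.mem_coe.mpr (Finset.mem_biUnion.mpr ⟨i, Finset.mem_univ i, hy⟩)
  intro m hm
  have hFiter : ∀ j, (⇑F)^[j] m ∈ N := by
    intro j
    induction j with
    | zero => exact hm
    | succ k ih => rw [Function.iterate_succ_apply']; exact tor_F S F γφ hF hFS ih
  exact htf m (tor_of_iterates F T fun j => hsub _ (hFiter j))

lemma li_of_no_rel {n : ℕ} (g : Fin n → M)
    (hrel : ∀ c : Fin n → K[X], (∑ i, pact S (c i) (g i)) = 0 → ∀ i, c i = 0) :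
    LinearIndependent K (fun p : Fin n × ℕ => (⇑S)^[p.2] (g p.1)) := by
  rw [linearIndependent_iff]
  intro l hl
  set c : Fin n → K[X] := fun i => ⟨AddMonoidAlgebra.ofCoeff (l.curry i)⟩ with hc
  have hpc : ∀ i, pact S (c i) (g i) = (l.curry i).sum fun j x => x • (⇑S)^[j] (g i) :=
    fun i => rfl
  have h1 : ∑ i, pact S (c i) (g i) =
      l.curry.sum fun i q => q.sum fun j x => x • (⇑S)^[j] (g i) := by
    rw [Finsupp.sum]
    rw [show ∑ i : Fin n, pact S (c i) (g i)
        = ∑ i : Fin n, (l.curry i).sum fun j x => x • (⇑S)^[j] (g i) from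
      Finset.sum_congr rfl fun i _ => hpc i]
    refine (Finset.sum_subset (Finset.subset_univ _) ?_).symm
    intro i _ hnot
    rw [Finsupp.notMem_support_iff.mp hnot, Finsupp.sum_zero_index]
  have h2 := Finsupp.sum_curry_index l (fun i j x => x • (⇑S)^[j] (g i))
  rw [Finsupp.linearCombination_apply] at hl
  have hsum : ∑ i, pact S (c i) (g i) = 0 := by
    rw [h1, h2]; exact hl
  have hczero := hrel c hsum
  have hcur0 : l.curry = 0 := by
    ext i j
    have := hczero i
    rw [hc] at this
    have h3 : l.curry i = 0 := by
      have := congrArg Polynomial.toFinsupp this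
      simpa using this
    rw [h3]; rfl
  ext p
  have h4 : l.curry p.1 p.2 = 0 := by rw [hcur0]; rfl
  rw [Finsupp.curry_apply] at h4
  simpa using h4

end G

section I
variable {K : Type} [Field K] {M : Type} [AddCommGroup M] [Module K M]
variable (γ : K →+* K) (S : M →+ M)

noncomputable def pactHom (p : K[X]) : M →+ M where
  toFun m := pact S p m
  map_zero' := pact_zero_right S p
  map_add' := pact_add_right S p

lemma main_free (hS : ∀ (x : K) (m : M), S (x • m) = γ x • S m)
    (hbij : Function.Bijective ⇑γ)
    (htorz : ∀ m : M, IsTor (K := K) S m → m = 0) :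
    ∀ (n : ℕ) (g : Fin n → M), spanR K S g = ⊤ →
      ∃ s : Set M,
        LinearIndependent K (fun p : s × ℕ => (⇑S)^[p.2] (p.1 : M)) ∧
        span K {m : M | ∃ x ∈ s, ∃ l : ℕ, m = (⇑S)^[l] x} = ⊤ := by
  intro n
  induction n with
  | zero =>
      intro g hg
      have hM : ∀ m : M, m = 0 := by
        intro m
        have hm : m ∈ spanR K S g := by rw [hg]; trivial
        have hset : {v : M | ∃ (i : Fin 0) (l : ℕ), v = (⇑S)^[l] (g i)} = ∅ := by
          ext v
          exact ⟨fun ⟨i, _⟩ => i.elim0, fun h => h.elim⟩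
        rw [spanR, hset, span_empty, mem_bot] at hm
        exact hm
      refine ⟨∅, linearIndependent_empty_type, ?_⟩
      refine eq_top_iff.mpr fun m _ => ?_
      rw [hM m]
      exact zero_mem _
  | succ n IH =>
      suffices Haux : ∀ (d : ℕ) (g : Fin (n + 1) → M), spanR K S g = ⊤ →
          ∀ c : Fin (n + 1) → K[X], (∑ i, pact S (c i) (g i)) = 0 →
          (∃ i, c i ≠ 0 ∧ (c i).natDegree ≤ d) →
          ∃ s : Set M,
            LinearIndependent K (fun p : s × ℕ => (⇑S)^[p.2] (p.1 : M)) ∧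
            span K {m : M | ∃ x ∈ s, ∃ l : ℕ, m = (⇑S)^[l] x} = ⊤ by
        intro g hg
        by_cases hrel : ∀ c : Fin (n + 1) → K[X], (∑ i, pact S (c i) (g i)) = 0 → ∀ i, c i = 0
        · have hli := li_of_no_rel S g hrel
          have hginj : Function.Injective g := by
            intro i i' hgii
            have h7 := hli.injective (a₁ := (i, 0)) (a₂ := (i', 0)) (by simpa using hgii)
            exact (Prod.ext_iff.mp h7).1
          refine ⟨Set.range g, ?_, ?_⟩
          · have heq : (fun p : (Set.range g) × ℕ => (⇑S)^[p.2] (p.1 : M))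
                = (fun q : Fin (n + 1) × ℕ => (⇑S)^[q.2] (g q.1)) ∘
                  (Prod.map (⇑(Equiv.ofInjective g hginj).symm) id) := by
              funext p
              obtain ⟨x, j⟩ := p
              simp only [Function.comp_apply, Prod.map_apply, id_eq]
              rw [Equiv.apply_ofInjective_symm hginj]
            rw [heq]
            exact hli.comp _
              ((Equiv.ofInjective g hginj).symm.injective.prodMap Function.injective_id)
          · rw [show {m : M | ∃ x ∈ Set.range g, ∃ l : ℕ, m = (⇑S)^[l] x}
                = {v : M | ∃ (i : Fin (n + 1)) (l : ℕ), v = (⇑S)^[l] (g i)} by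
              ext u
              constructor
              · rintro ⟨x, ⟨i, rfl⟩, l, rfl⟩; exact ⟨i, l, rfl⟩
              · rintro ⟨i, l, rfl⟩; exact ⟨g i, ⟨i, rfl⟩, l, rfl⟩]
            exact hg
        · push_neg at hrel
          obtain ⟨c, hcsum, i₁, hci₁⟩ := hrel
          exact Haux (c i₁).natDegree g hg c hcsum ⟨i₁, hci₁, le_rfl⟩
      intro d
      induction d using Nat.strong_induction_on with
      | _ d IHd =>
        intro g hg c hcsum hcw
        classical
        obtain ⟨iw, hiw0, hiwd⟩ := hcw
        obtain ⟨i₀, hi₀S, hi₀min⟩ := Finset.exists_min_image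
          (Finset.univ.filter fun i => c i ≠ 0) (fun i => (c i).natDegree)
          ⟨iw, Finset.mem_filter.mpr ⟨Finset.mem_univ _, hiw0⟩⟩
        have hc₀ : c i₀ ≠ 0 := (Finset.mem_filter.mp hi₀S).2
        have hd₀ : (c i₀).natDegree ≤ d :=
          le_trans (hi₀min iw (Finset.mem_filter.mpr ⟨Finset.mem_univ _, hiw0⟩)) hiwd
        choose v r hvr hrdeg using fun i => rdiv γ hbij (c i₀) hc₀ (c i)
        set w : M := g i₀ + ∑ i ∈ Finset.univ.erase i₀, pact S (v i) (g i) with hw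
        set g2 : Fin (n + 1) → M := Function.update g i₀ w with hg2
        have hg2ne : ∀ i, i ≠ i₀ → g2 i = g i := fun i hi => Function.update_of_ne hi w g
        have hg2eq : g2 i₀ = w := Function.update_self i₀ w g
        have hspan2 : spanR K S g2 = ⊤ := by
          refine eq_top_iff.mpr ?_
          rw [← hg]
          refine span_le.mpr ?_
          rintro x ⟨i, l, rfl⟩
          have hmemg : ∀ j : Fin (n + 1), g j ∈ spanR K S g2 := by
            intro j
            by_cases hj : j = i₀
            · subst hj
              have hsum_eq : ∑ i ∈ Finset.univ.erase j, pact S (v i) (g2 i)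
                  = ∑ i ∈ Finset.univ.erase j, pact S (v i) (g i) :=
                Finset.sum_congr rfl fun i hi => by
                  rw [hg2ne i (Finset.ne_of_mem_erase hi)]
              have hw2 : g j = g2 j - ∑ i ∈ Finset.univ.erase j, pact S (v i) (g2 i) := by
                rw [hg2eq, hsum_eq, hw]; abel
              rw [hw2]
              refine Submodule.sub_mem _ (subset_span ⟨j, 0, rfl⟩)
                (Submodule.sum_mem _ fun i _ => ?_)
              exact pact_mem S (spanR_S_stable γ S hS g2) (subset_span ⟨i, 0, rfl⟩) (v i)
            · rw [← hg2ne j hj]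
              exact subset_span ⟨j, 0, rfl⟩
          exact iter_mem S (spanR_S_stable γ S hS g2) (hmemg i) l
        set c2 : Fin (n + 1) → K[X] := fun i => if i = i₀ then c i₀ else r i with hc2
        have hc2i₀ : c2 i₀ = c i₀ := by simp [hc2]
        have hc2ne : ∀ i, i ≠ i₀ → c2 i = r i := fun i hi => by simp [hc2, hi]
        have hw_exp : pact S (c i₀) w
            = pact S (c i₀) (g i₀)
              + ∑ i ∈ Finset.univ.erase i₀, pact S (pmul γ (c i₀) (v i)) (g i) := by
          rw [hw, pact_add_right]
          congr 1
          rw [show pact S (c i₀) (∑ i ∈ Finset.univ.erase i₀, pact S (v i) (g i))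
              = pactHom S (c i₀) (∑ i ∈ Finset.univ.erase i₀, pact S (v i) (g i)) from rfl,
            map_sum]
          exact Finset.sum_congr rfl fun i _ => (pact_pmul γ S hS _ _ _).symm
        have hc2sum : ∑ i, pact S (c2 i) (g2 i) = 0 := by
          calc ∑ i, pact S (c2 i) (g2 i)
              = pact S (c2 i₀) (g2 i₀)
                + ∑ i ∈ Finset.univ.erase i₀, pact S (c2 i) (g2 i) :=
                (Finset.add_sum_erase _ _ (Finset.mem_univ i₀)).symm
            _ = pact S (c i₀) w + ∑ i ∈ Finset.univ.erase i₀, pact S (r i) (g i) := by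
                rw [hg2eq, hc2i₀]
                congr 1
                exact Finset.sum_congr rfl fun i hi => by
                  rw [hc2ne i (Finset.ne_of_mem_erase hi),
                    hg2ne i (Finset.ne_of_mem_erase hi)]
            _ = pact S (c i₀) (g i₀)
                + ∑ i ∈ Finset.univ.erase i₀,
                    (pact S (pmul γ (c i₀) (v i)) (g i) + pact S (r i) (g i)) := by
                rw [hw_exp, Finset.sum_add_distrib]; abel
            _ = ∑ i, pact S (c i) (g i) := by
                rw [← Finset.add_sum_erase _ (fun i => pact S (c i) (g i))
                  (Finset.mem_univ i₀)]
                congr 1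
                exact Finset.sum_congr rfl fun i _ => by
                  rw [← pact_add_left, ← hvr i]
            _ = 0 := hcsum
        by_cases hrz : ∀ i, i ≠ i₀ → r i = 0
        · have h6 := (Finset.add_sum_erase _ (fun i => pact S (c2 i) (g2 i))
            (Finset.mem_univ i₀)).trans hc2sum
          rw [Finset.sum_eq_zero (fun i hi => by
            rw [hc2ne i (Finset.ne_of_mem_erase hi), hrz i (Finset.ne_of_mem_erase hi)]
            exact pact_zero_left S (g2 i)), add_zero, hc2i₀, hg2eq] at h6
          have hw0 : w = 0 := htorz w ⟨c i₀, hc₀, h6⟩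
          set g3 : Fin n → M := g2 ∘ i₀.succAbove with hg3
          have hg3top : spanR K S g3 = ⊤ := by
            refine eq_top_iff.mpr ?_
            rw [← hspan2]
            refine span_le.mpr ?_
            rintro x ⟨i, l, rfl⟩
            by_cases hi : i = i₀
            · subst hi
              rw [hg2eq, hw0, iterate_map_zero]
              exact zero_mem _
            · obtain ⟨j, rfl⟩ := Fin.exists_succAbove_eq hi
              exact subset_span ⟨j, l, rfl⟩
          exact IH g3 hg3top
        · push_neg at hrz
          obtain ⟨i₁, hi₁ne, hri₁⟩ := hrz
          have hdeglt : (r i₁).natDegree < (c i₀).natDegree :=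
            Polynomial.natDegree_lt_natDegree hri₁ (hrdeg i₁)
          refine IHd (r i₁).natDegree (lt_of_lt_of_le hdeglt hd₀) g2 hspan2 c2 hc2sum
            ⟨i₁, ?_, ?_⟩
          · rw [hc2ne i₁ hi₁ne]; exact hri₁
          · rw [hc2ne i₁ hi₁ne]

end I
end SkewFree

/-!
STATEMENT 3: If a `K{φ,ρ}`-module `M` is finitely generated as a `K⟨ρ⟩`-module,
has no nonzero `φ`-torsion element, and `γρ` is an automorphism of `K`, then `M`
is free as a `K⟨ρ⟩`-module: there is a family `(e_k)` in `M` whose `S`-iterates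
`(S^j e_k)` form a `K`-basis of `M`.
-/
theorem free_over_Krho_of_fg_and_phi_torsionfree
    {K : Type} [Field K] (γφ γρ : K →+* K)
    (hcomm : ∀ x : K, γφ (γρ x) = γρ (γφ x))
    {M : Type} [AddCommGroup M] [Module K M]
    (F S : M →+ M)
    (hF : ∀ (x : K) (m : M), F (x • m) = γφ x • F m)
    (hS : ∀ (x : K) (m : M), S (x • m) = γρ x • S m)
    (hFS : ∀ m : M, F (S m) = S (F m))
    (hfg : ∃ (n : ℕ) (g : Fin n → M),
        Submodule.span K {m : M | ∃ (i : Fin n) (l : ℕ), m = S^[l] (g i)} = ⊤)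
    (htf : ∀ m : M,
        (∃ c : ℕ →₀ K, c ≠ 0 ∧ (c.sum fun i x => x • F^[i] m) = 0) → m = 0)
    (hbij : Function.Bijective γρ) :
    ∃ s : Set M,
      LinearIndependent K (fun p : s × ℕ => S^[p.2] (p.1 : M)) ∧
      Submodule.span K {m : M | ∃ x ∈ s, ∃ l : ℕ, m = S^[l] x} = ⊤ := by
  obtain ⟨n, g, hg⟩ := hfg
  have hgspan : SkewFree.spanR K S g = ⊤ := hg
  have htf' : ∀ m : M, SkewFree.IsTor (K := K) F m → m = 0 := by
    rintro m ⟨p, hp, h0⟩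
    exact htf m ⟨p.toFinsupp.coeff, fun h => hp (Polynomial.toFinsupp_eq_zero.mp (AddMonoidAlgebra.coeff_eq_zero.mp h)), h0⟩
  have htorz := SkewFree.tor_eq_bot γρ S hS F γφ hF hFS g hgspan htf'
  obtain ⟨s, hli, hsp⟩ := SkewFree.main_free γρ S hS hbij htorz n g hgspan
  exact ⟨s, hli, hsp⟩
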